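/- Let p ∈ (0, 1/2) and let K be a p-core CRG all of whose vertices are black. Suppose v_1, …, v_ℓ are distinct vertices of K, pairwise joined by gray edges, such that every vertex of K outside {v_1,…,v_ℓ} is joined by a white edge to at least one of v_1, …, v_ℓ (that is, {v_1,…,v_ℓ} is a maximal gray clique). Then g_K(p) > p/ℓ. -/

import Mathlib

/-- Colors for edges of a colored regularity graph. -/
inductive EColor : Type
  | white
  | gray
  | black
deriving DecidableEq

/-- A colored regularity graph (CRG) on a finite vertex type `V`: each vertex is
white or black (`vWhite v = true` means white), and each pair of distinct vertices
gets a symmetric edge color (white, gray or black). -/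
structure CRG (V : Type) [Fintype V] where
  vWhite : V → Bool
  ecolor : V → V → EColor
  ecolor_symm : ∀ u v, ecolor u v = ecolor v u

namespace CRG

variable {V : Type} [Fintype V] [DecidableEq V]

/-- The matrix `M_K(p)`. -/
noncomputable def M (K : CRG V) (p : ℝ) (u v : V) : ℝ :=
  if u = v then (if K.vWhite u then p else 1 - p)
  else
    match K.ecolor u v with
    | EColor.white => p
    | EColor.black => 1 - p
    | EColor.gray => 0

/-- The function `g_K(p)`: the minimum of `xᵀ M_K(p) x` over nonnegative weight
vectors summing to `1`. -/
noncomputable def g (K : CRG V) (p : ℝ) : ℝ :=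
  sInf {r : ℝ | ∃ x : V → ℝ, (∀ v, 0 ≤ x v) ∧ (∑ v, x v) = 1 ∧
    r = ∑ u, ∑ v, x u * K.M p u v * x v}

/-- The sub-CRG induced on a subset `s` of the vertices. -/
def sub (K : CRG V) (s : Finset V) : CRG {v // v ∈ s} where
  vWhite := fun v => K.vWhite v.1
  ecolor := fun u v => K.ecolor u.1 v.1
  ecolor_symm := fun u v => K.ecolor_symm u.1 v.1

/-- `K` is `p`-core if `g_K(p) < g_{K'}(p)` for every proper (nonempty) sub-CRG `K'`. -/
def IsPCore (K : CRG V) (p : ℝ) : Prop :=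
  ∀ s : Finset V, s.Nonempty → s ≠ Finset.univ → K.g p < (K.sub s).g p

/-- `x` is an optimal weight vector for `K` at `p`. -/
def IsOptWeight (K : CRG V) (p : ℝ) (x : V → ℝ) : Prop :=
  (∀ v, 0 ≤ x v) ∧ (∑ v, x v) = 1 ∧
    (∑ u, ∑ v, x u * K.M p u v * x v) = K.g p

/-- The gray degree `d_G(v)`: total weight of gray neighbors of `v`. -/
noncomputable def dG (K : CRG V) (x : V → ℝ) (v : V) : ℝ :=
  ∑ w ∈ Finset.univ.filter fun w => w ≠ v ∧ K.ecolor v w = EColor.gray, x w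

/-- The white degree `d_W(v)`: total weight of white neighbors of `v`, including `v`
itself if `v` is white. -/
noncomputable def dW (K : CRG V) (x : V → ℝ) (v : V) : ℝ :=
  (∑ w ∈ Finset.univ.filter fun w => w ≠ v ∧ K.ecolor v w = EColor.white, x w) +
    (if K.vWhite v then x v else 0)

/-- The black degree `d_B(v)`: total weight of black neighbors of `v`, including `v`
itself if `v` is black. -/
noncomputable def dB (K : CRG V) (x : V → ℝ) (v : V) : ℝ :=
  (∑ w ∈ Finset.univ.filter fun w => w ≠ v ∧ K.ecolor v w = EColor.black, x w) +
    (if K.vWhite v then 0 else x v)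

/-- The number of gray neighbors of `v`. -/
def grayDeg (K : CRG V) (v : V) : ℕ :=
  (Finset.univ.filter fun w => w ≠ v ∧ K.ecolor v w = EColor.gray).card

end CRG

/-- A graph `H` embeds in a CRG `K`, written `H ↦ K`. -/
def EmbedsIn {α : Type*} {V : Type} [Fintype V] (H : SimpleGraph α) (K : CRG V) : Prop :=
  ∃ φ : α → V,
    (∀ a b : α, H.Adj a b →
      (φ a = φ b ∧ K.vWhite (φ a) = false) ∨
      (φ a ≠ φ b ∧ (K.ecolor (φ a) (φ b) = EColor.black ∨ K.ecolor (φ a) (φ b) = EColor.gray))) ∧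
    (∀ a b : α, a ≠ b → ¬H.Adj a b →
      (φ a = φ b ∧ K.vWhite (φ a) = true) ∨
      (φ a ≠ φ b ∧ (K.ecolor (φ a) (φ b) = EColor.white ∨ K.ecolor (φ a) (φ b) = EColor.gray)))

namespace CRGAux

open Finset

variable {V : Type} [Fintype V] [DecidableEq V]

/-- The quadratic form. -/
noncomputable def Q (K : CRG V) (p : ℝ) (x : V → ℝ) : ℝ :=
  ∑ u, ∑ v, x u * K.M p u v * x v

/-- The row sum `(M x)_a`. -/
noncomputable def R (K : CRG V) (p : ℝ) (x : V → ℝ) (a : V) : ℝ :=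
  ∑ v, K.M p a v * x v

lemma M_symm (K : CRG V) (p : ℝ) (u v : V) : K.M p u v = K.M p v u := by
  unfold CRG.M
  rcases eq_or_ne u v with h | h
  · simp [h]
  · rw [if_neg h, if_neg (Ne.symm h), K.ecolor_symm]

lemma M_nonneg (K : CRG V) {p : ℝ} (hp0 : 0 ≤ p) (hp1 : p ≤ 1) (u v : V) :
    0 ≤ K.M p u v := by
  rcases eq_or_ne u v with h | h
  · unfold CRG.M; rw [if_pos h]; split_ifs <;> linarith
  · unfold CRG.M
    rw [if_neg h]
    cases K.ecolor u v <;> dsimp <;> linarith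

lemma g_le (K : CRG V) {p : ℝ} (hp0 : 0 ≤ p) (hp1 : p ≤ 1)
    (y : V → ℝ) (hnn : ∀ v, 0 ≤ y v) (hsum : ∑ v, y v = 1) :
    K.g p ≤ Q K p y := by
  apply csInf_le
  · refine ⟨0, ?_⟩
    rintro r ⟨z, hz1, hz2, rfl⟩
    exact Finset.sum_nonneg fun u _ => Finset.sum_nonneg fun v _ =>
      mul_nonneg (mul_nonneg (hz1 u) (M_nonneg K hp0 hp1 u v)) (hz1 v)
  · exact ⟨y, hnn, hsum, rfl⟩

lemma exists_opt [Nonempty V] (K : CRG V) {p : ℝ} (hp0 : 0 ≤ p) (hp1 : p ≤ 1) :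
    ∃ x : V → ℝ, (∀ v, 0 ≤ x v) ∧ (∑ v, x v) = 1 ∧ Q K p x = K.g p ∧
      ∀ y : V → ℝ, (∀ v, 0 ≤ y v) → (∑ v, y v) = 1 → Q K p x ≤ Q K p y := by
  have hcont : Continuous (Q K p) :=
    continuous_finset_sum _ fun u _ => continuous_finset_sum _ fun v _ =>
      ((continuous_apply u).mul continuous_const).mul (continuous_apply v)
  have hne : (stdSimplex ℝ V).Nonempty := by
    refine ⟨fun v => if v = Classical.arbitrary V then 1 else 0, fun v => ?_, ?_⟩
    · dsimp only
      split_ifs <;> norm_num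
    · simp
  obtain ⟨x, hxmem, hxmin⟩ := (isCompact_stdSimplex ℝ V).exists_isMinOn hne hcont.continuousOn
  obtain ⟨hnn, hsum⟩ := hxmem
  have hmin : ∀ y : V → ℝ, (∀ v, 0 ≤ y v) → (∑ v, y v) = 1 → Q K p x ≤ Q K p y :=
    fun y h1 h2 => hxmin ⟨h1, h2⟩
  refine ⟨x, hnn, hsum, le_antisymm ?_ (g_le K hp0 hp1 x hnn hsum), hmin⟩
  refine le_csInf ⟨Q K p x, x, hnn, hsum, rfl⟩ ?_
  rintro r ⟨z, hz1, hz2, rfl⟩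
  exact hmin z hz1 hz2

lemma opt_pos (K : CRG V) {p : ℝ} (hp0 : 0 ≤ p) (hp1 : p ≤ 1)
    (hcore : K.IsPCore p) (x : V → ℝ) (hnn : ∀ v, 0 ≤ x v)
    (hsum : ∑ v, x v = 1) (hval : Q K p x = K.g p) : ∀ v, 0 < x v := by
  intro v
  rcases (hnn v).lt_or_eq with h | h
  · exact h
  exfalso
  classical
  set s : Finset V := Finset.univ.filter (fun w => x w ≠ 0) with hs
  have hvs : v ∉ s := by simp [hs, ← h]
  have hsum_s : ∑ w ∈ s, x w = 1 := by
    rw [hs, Finset.sum_filter_ne_zero]; exact hsum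
  have hsne : s.Nonempty := by
    rcases Finset.exists_ne_zero_of_sum_ne_zero
      (by rw [hsum_s]; norm_num : ∑ w ∈ s, x w ≠ 0) with ⟨w, hw, _⟩
    exact ⟨w, hw⟩
  have hsuniv : s ≠ Finset.univ := fun hh => hvs (hh ▸ Finset.mem_univ v)
  have hlt := hcore s hsne hsuniv
  have hzero : ∀ w : V, w ∉ s → x w = 0 := by
    intro w hw
    by_contra hxw
    exact hw (Finset.mem_filter.mpr ⟨Finset.mem_univ w, hxw⟩)
  have hM : ∀ u w : {w // w ∈ s}, (K.sub s).M p u w = K.M p u.1 w.1 := by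
    intro u w
    rcases eq_or_ne u w with h | h
    · subst h; simp [CRG.M, CRG.sub]; rfl
    · unfold CRG.M CRG.sub
      rw [if_neg h, if_neg (fun hh => h (Subtype.ext hh))]
  have inner_eq : ∀ u : V, ∑ w ∈ s, x u * K.M p u w * x w = ∑ w, x u * K.M p u w * x w := by
    intro u
    refine Finset.sum_subset (Finset.subset_univ s) fun w _ hw => ?_
    simp [hzero w hw]
  have hQ : Q (K.sub s) p (fun w => x w.1) = Q K p x := by
    calc Q (K.sub s) p (fun w => x w.1)
        = ∑ u : {w // w ∈ s}, ∑ w : {w // w ∈ s}, x u.1 * K.M p u.1 w.1 * x w.1 := by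
          unfold Q
          exact Finset.sum_congr rfl fun u _ => Finset.sum_congr rfl fun w _ => by rw [hM]
      _ = ∑ u : {w // w ∈ s}, ∑ w ∈ s, x u.1 * K.M p u.1 w * x w := by
          refine Finset.sum_congr rfl fun u _ => ?_
          exact Finset.sum_coe_sort s (fun w => x u.1 * K.M p u.1 w * x w)
      _ = ∑ u : {w // w ∈ s}, ∑ w, x u.1 * K.M p u.1 w * x w :=
          Finset.sum_congr rfl fun u _ => inner_eq u.1
      _ = ∑ u ∈ s, ∑ w, x u * K.M p u w * x w :=
          Finset.sum_coe_sort s (fun u => ∑ w, x u * K.M p u w * x w)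
      _ = Q K p x := by
          refine Finset.sum_subset (Finset.subset_univ s) fun u _ hu => ?_
          exact Finset.sum_eq_zero fun w _ => by simp [hzero u hu]
  have hle : (K.sub s).g p ≤ Q K p x := by
    rw [← hQ]
    refine g_le (K.sub s) hp0 hp1 _ (fun w => hnn w.1) ?_
    rw [Finset.sum_coe_sort s x, hsum_s]
  rw [hval] at hle
  linarith

lemma row_le (K : CRG V) {p : ℝ} (x : V → ℝ)
    (hsum : ∑ v, x v = 1) (hpos : ∀ v, 0 < x v)
    (hmin : ∀ y : V → ℝ, (∀ v, 0 ≤ y v) → (∑ v, y v) = 1 → Q K p x ≤ Q K p y)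
    (a b : V) : R K p x b ≤ R K p x a := by
  rcases eq_or_ne a b with rfl | hab
  · exact le_refl _
  by_contra hcon
  push_neg at hcon
  set δ := R K p x b - R K p x a with hδdef
  have hδ : 0 < δ := by simp only [hδdef]; linarith
  set d : V → ℝ := fun v => (if v = a then (1:ℝ) else 0) - (if v = b then 1 else 0) with hd
  have hda : d a = 1 := by simp [hd, hab]
  have hdb : d b = -1 := by simp [hd, Ne.symm hab]
  have hdo : ∀ v, v ≠ a → v ≠ b → d v = 0 := by
    intro v h1 h2; simp [hd, h1, h2]
  have hsumd : ∑ v, d v = 0 := by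
    simp [hd, Finset.sum_sub_distrib, Finset.sum_ite_eq']
  have hdR : ∑ u, d u * R K p x u = R K p x a - R K p x b := by
    have h1 : ∀ u, d u * R K p x u =
        (if u = a then R K p x u else 0) - (if u = b then R K p x u else 0) := by
      intro u; simp [hd, sub_mul, ite_mul]
    simp_rw [h1, Finset.sum_sub_distrib, Finset.sum_ite_eq']
    simp
  have hA1 : ∑ u, ∑ v, d u * K.M p u v * x v = R K p x a - R K p x b := by
    rw [← hdR]
    refine Finset.sum_congr rfl fun u _ => ?_
    unfold R; rw [Finset.mul_sum]
    exact Finset.sum_congr rfl fun v _ => by ring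
  have hA2 : ∑ u, ∑ v, x u * K.M p u v * d v = R K p x a - R K p x b := by
    rw [Finset.sum_comm, ← hdR]
    refine Finset.sum_congr rfl fun v _ => ?_
    unfold R; rw [Finset.mul_sum]
    refine Finset.sum_congr rfl fun u _ => ?_
    rw [M_symm K p v u]; ring
  set C := ∑ u, ∑ v, d u * K.M p u v * d v with hC
  have hexpand : ∀ ε : ℝ, Q K p (fun v => x v + ε * d v)
      = Q K p x + ε * (R K p x a - R K p x b) + ε * (R K p x a - R K p x b) + ε^2 * C := by
    intro ε
    calc Q K p (fun v => x v + ε * d v)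
        = ∑ u, ∑ v, (x u * K.M p u v * x v + ε * (d u * K.M p u v * x v)
            + ε * (x u * K.M p u v * d v) + ε ^ 2 * (d u * K.M p u v * d v)) := by
          unfold Q
          exact Finset.sum_congr rfl fun u _ => Finset.sum_congr rfl fun v _ => by ring
      _ = (∑ u, ∑ v, x u * K.M p u v * x v) + ε * (∑ u, ∑ v, d u * K.M p u v * x v)
            + ε * (∑ u, ∑ v, x u * K.M p u v * d v)
            + ε ^ 2 * (∑ u, ∑ v, d u * K.M p u v * d v) := by
          simp_rw [Finset.sum_add_distrib, ← Finset.mul_sum]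
      _ = Q K p x + ε * (R K p x a - R K p x b) + ε * (R K p x a - R K p x b) + ε^2 * C := by
          rw [hA1, hA2, ← hC]
          rfl
  set ε := min (x b) (δ / (|C| + 1)) with hε
  have hε0 : 0 < ε := lt_min (hpos b) (div_pos hδ (by positivity))
  have hεb : ε ≤ x b := min_le_left _ _
  have hεC : ε * |C| < δ := by
    have h1 : ε ≤ δ / (|C| + 1) := min_le_right _ _
    have h2 : ε * (|C| + 1) ≤ δ := by
      rw [← div_mul_cancel₀ δ (by positivity : (|C| : ℝ) + 1 ≠ 0)]
      exact mul_le_mul_of_nonneg_right h1 (by positivity)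
    nlinarith [abs_nonneg C]
  set y : V → ℝ := fun v => x v + ε * d v with hy
  have hynn : ∀ v, 0 ≤ y v := by
    intro v
    by_cases hva : v = a
    · subst hva
      simp only [hy, hda]
      have := (hpos v).le
      linarith
    by_cases hvb : v = b
    · subst hvb
      simp only [hy, hdb]
      linarith
    · simp only [hy, hdo v hva hvb]
      have := (hpos v).le
      linarith
  have hysum : ∑ v, y v = 1 := by
    simp only [hy]
    rw [Finset.sum_add_distrib, hsum, ← Finset.mul_sum, hsumd]
    ring
  have hQy : Q K p x ≤ Q K p y := hmin y hynn hysum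
  have hQy2 : Q K p y = Q K p x + ε * (R K p x a - R K p x b)
      + ε * (R K p x a - R K p x b) + ε^2 * C := hexpand ε
  have hab2 : R K p x a - R K p x b = -δ := by simp [hδdef]
  rw [hab2] at hQy2
  nlinarith [mul_le_mul_of_nonneg_left (le_abs_self C) (sq_nonneg ε),
    mul_pos hε0 hδ, mul_lt_mul_of_pos_left hεC hε0]

lemma row_eq_g [Nonempty V] (K : CRG V) {p : ℝ} (x : V → ℝ)
    (hsum : ∑ v, x v = 1) (hpos : ∀ v, 0 < x v) (hval : Q K p x = K.g p)
    (hmin : ∀ y : V → ℝ, (∀ v, 0 ≤ y v) → (∑ v, y v) = 1 → Q K p x ≤ Q K p y)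
    (a : V) : R K p x a = K.g p := by
  have hall : ∀ u, R K p x u = R K p x a := fun u =>
    le_antisymm (row_le K x hsum hpos hmin a u) (row_le K x hsum hpos hmin u a)
  have hQx : Q K p x = ∑ u, x u * R K p x u := by
    unfold Q R
    exact Finset.sum_congr rfl fun u _ => by
      rw [Finset.mul_sum]
      exact Finset.sum_congr rfl fun v _ => by ring
  calc R K p x a = (∑ u, x u) * R K p x a := by rw [hsum, one_mul]
    _ = ∑ u, x u * R K p x u := by
        rw [Finset.sum_mul]
        exact Finset.sum_congr rfl fun u _ => by rw [hall u]
    _ = Q K p x := hQx.symm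
    _ = K.g p := hval

end CRGAux


theorem g_gt_p_div_card_of_maximal_gray_clique {V : Type} [Fintype V] [DecidableEq V] [Nonempty V]
    (p : ℝ) (hp : p ∈ Set.Ioo (0 : ℝ) (1 / 2))
    (K : CRG V) (hcore : K.IsPCore p)
    (hblack : ∀ v : V, K.vWhite v = false)
    (ℓ : ℕ) (vs : Fin ℓ → V) (hinj : Function.Injective vs)
    (hgray : ∀ i j : Fin ℓ, i ≠ j → K.ecolor (vs i) (vs j) = EColor.gray)
    (hmaximal : ∀ w : V, w ∉ Set.range vs → ∃ i : Fin ℓ, K.ecolor w (vs i) = EColor.white) :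
    p / (ℓ : ℝ) < K.g p := by

  classical
  obtain ⟨hp0, hp2⟩ := hp
  have hp1 : p ≤ 1 := by linarith
  rcases Nat.eq_zero_or_pos ℓ with rfl | hl
  · exfalso
    obtain ⟨i, -⟩ := hmaximal (Classical.arbitrary V) (by rintro ⟨i, -⟩; exact i.elim0)
    exact i.elim0
  obtain ⟨x, hnn, hsum, hval, hmin⟩ := CRGAux.exists_opt K hp0.le hp1
  have hpos := CRGAux.opt_pos K hp0.le hp1 hcore x hnn hsum hval
  have hrow := fun a => CRGAux.row_eq_g K x hsum hpos hval hmin a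
  have hσex : ∀ w : V, ∃ i : Fin ℓ, w ∉ Set.range vs → K.ecolor w (vs i) = EColor.white := by
    intro w
    by_cases h : w ∉ Set.range vs
    · obtain ⟨i, hi⟩ := hmaximal w h
      exact ⟨i, fun _ => hi⟩
    · exact ⟨⟨0, hl⟩, fun h' => absurd h' h⟩
  choose σ hσw using hσex
  set O : Finset V := Finset.univ.filter (fun w => w ∉ Set.range vs) with hO
  set A : Fin ℓ → Finset V := fun i => O.filter (fun w => σ w = i) with hA
  have hST : (∑ i, x (vs i)) + (∑ w ∈ O, x w) = 1 := by
    have h1 : Finset.univ.filter (fun w => w ∈ Set.range vs) = Finset.univ.image vs := by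
      ext w
      simp [Set.mem_range, eq_comm]
    have h2 : ∑ w ∈ Finset.univ.filter (fun w => w ∈ Set.range vs), x w = ∑ i, x (vs i) := by
      rw [h1, Finset.sum_image (fun i _ j _ h => hinj h)]
    rw [← h2, hO]
    rw [Finset.sum_filter_add_sum_filter_not Finset.univ _ x]
    exact hsum
  have hfib : ∑ i, ∑ w ∈ A i, x w = ∑ w ∈ O, x w := by
    rw [hA]
    exact Finset.sum_fiberwise O σ x
  have hAmem : ∀ i : Fin ℓ, ∀ w ∈ A i, w ∉ Set.range vs ∧ σ w = i := by
    intro i w hw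
    rw [hA] at hw
    simp only [Finset.mem_filter, hO, Finset.mem_univ, true_and] at hw
    exact hw
  have hrowbound : ∀ i : Fin ℓ, (1 - p) * x (vs i) + p * ∑ w ∈ A i, x w ≤ K.g p := by
    intro i
    rw [← hrow (vs i)]
    have hnotin : vs i ∉ A i := by
      intro hmem
      exact (hAmem i (vs i) hmem).1 ⟨i, rfl⟩
    have hle : ∑ v ∈ insert (vs i) (A i), K.M p (vs i) v * x v ≤ CRGAux.R K p x (vs i) :=
      Finset.sum_le_sum_of_subset_of_nonneg (Finset.subset_univ _) fun v _ _ =>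
        mul_nonneg (CRGAux.M_nonneg K hp0.le hp1 _ _) (hnn v)
    refine le_trans (le_of_eq ?_) hle
    have hdiag : K.M p (vs i) (vs i) = 1 - p := by
      simp [CRG.M, hblack (vs i)]
    have hwhiteM : ∀ w ∈ A i, K.M p (vs i) w * x w = p * x w := by
      intro w hw
      obtain ⟨hw1, hw2⟩ := hAmem i w hw
      have hne : vs i ≠ w := fun hh => hw1 ⟨i, hh⟩
      have hcol : K.ecolor (vs i) w = EColor.white := by
        rw [K.ecolor_symm, ← hw2]
        exact hσw w hw1
      simp [CRG.M, hne, hcol]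
    rw [Finset.sum_insert hnotin, hdiag, Finset.sum_congr rfl hwhiteM, ← Finset.mul_sum]
  have hsum_rows : (1 - p) * (∑ i, x (vs i)) + p * (∑ w ∈ O, x w) ≤ (ℓ : ℝ) * K.g p := by
    have h1 : ∑ i : Fin ℓ, ((1 - p) * x (vs i) + p * ∑ w ∈ A i, x w)
        = (1 - p) * (∑ i, x (vs i)) + p * (∑ w ∈ O, x w) := by
      rw [Finset.sum_add_distrib, ← Finset.mul_sum, ← Finset.mul_sum, hfib]
    have h2 : ∑ i : Fin ℓ, ((1 - p) * x (vs i) + p * ∑ w ∈ A i, x w)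
        ≤ ∑ _i : Fin ℓ, K.g p := Finset.sum_le_sum fun i _ => hrowbound i
    rw [h1] at h2
    simpa using h2
  have hSpos : 0 < ∑ i, x (vs i) :=
    Finset.sum_pos (fun i _ => hpos (vs i)) ⟨⟨0, hl⟩, Finset.mem_univ _⟩
  have hgoal : p < (ℓ : ℝ) * K.g p := by
    nlinarith [mul_pos (by linarith : (0:ℝ) < 1 - 2 * p) hSpos]
  have hl' : (0:ℝ) < (ℓ:ℝ) := by exact_mod_cast hl
  rw [div_lt_iff₀ hl']
  nlinarith [hgoal]
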